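/- If f : A → B is a functor between small categories that is not faithful, then there exist a preorder X and a functor φ : X → B such that the pullback X ×_B A in Cat is not a preorder. Consequently f is not a covering for the reflection Cat → Preord. -/

import Mathlib

open CategoryTheory
universe u

/-- The objects of a small category, regarded as carrying the reflected preorder. -/
def PreOb (A : Cat.{u, u}) : Type u := A

instance instPreObPreorder (A : Cat.{u, u}) : Preorder (PreOb A) where
  le x y := Nonempty ((show ↑A from x) ⟶ (show ↑A from y))
  le_refl x := ⟨𝟙 _⟩
  le_trans _ _ _ h h' := ⟨h.some ≫ h'.some⟩

/-- The reflection `I : Cat → Preord` on objects (regarded as landing in `Cat`). -/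
def ICat (A : Cat.{u, u}) : Cat.{u, u} := Cat.of (PreOb A)

instance (A : Cat.{u, u}) : Preorder ↑(ICat A) := instPreObPreorder A

/-- In the reflected preorder, a morphism of `A` witnesses an inequality. -/
def toLe {A : Cat.{u, u}} {x y : ↑A} (g : x ⟶ y) :
    (show PreOb A from x) ≤ (show PreOb A from y) := ⟨g⟩

/-- The unit of the reflection `Cat → Preord`. -/
def etaF (A : Cat.{u, u}) : A ⟶ ICat A where
  toFunctor :=
  { obj x := (show PreOb A from x)
    map {_x _y} g := homOfLE (toLe g)
    map_id _ := rfl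
    map_comp _ _ := rfl }

/-- The reflection `I : Cat → Preord` on morphisms. -/
def IFun {A B : Cat.{u, u}} (f : A ⟶ B) : ICat A ⟶ ICat B where
  toFunctor :=
  { obj x := (show PreOb B from f.toFunctor.obj (show ↑A from x))
    map {_x _y} g := homOfLE (Nonempty.map (fun h => f.toFunctor.map h) (leOfHom g))
    map_id _ := rfl
    map_comp _ _ := rfl }

/-- `f` is a trivial covering when its naturality square for the unit is a pullback in `Cat`. -/
def TrivialCov {A B : Cat.{u, u}} (f : A ⟶ B) : Prop :=
  IsPullback (etaF A) f (IFun f) (etaF B)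

/-- `p` is an effective descent morphism in `Cat`:
the pullback functor `p* : Cat/B → Cat/E` is monadic. -/
def EffDesc {E B : Cat.{u, u}} (p : E ⟶ B) : Prop :=
  Nonempty (MonadicRightAdjoint (Over.pullback p))

/-- `f` is a covering: some effective descent morphism pulls it back to a trivial covering. -/
def Covering {A B : Cat.{u, u}} (f : A ⟶ B) : Prop :=
  ∃ (C P : Cat.{u, u}) (p : C ⟶ B) (π₁ : P ⟶ C) (π₂ : P ⟶ A),
    EffDesc p ∧ IsPullback π₁ π₂ p f ∧ TrivialCov π₁

/-- A category is thin (a preorder) when there is at most one morphism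
between any two objects. -/
def Thin (X : Cat.{u, u}) : Prop := ∀ x y : ↑X, Subsingleton (x ⟶ y)

/-! ### Auxiliary material: the walking arrow as a preorder, and functor extensionality. -/

/-- The walking arrow: a two-element preorder. -/
structure WArr : Type u where
  down : Bool

instance : Preorder WArr.{u} where
  le x y := x.down ≤ y.down
  le_refl x := Bool.le_refl x.down
  le_trans a b c h h' := Bool.le_trans (h : a.down ≤ b.down) (h' : b.down ≤ c.down)

/-- The non-identity arrow of the walking arrow. -/
def warr : (⟨false⟩ : WArr.{u}) ⟶ (⟨true⟩ : WArr.{u}) :=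
  homOfLE (show (false : Bool) ≤ true by decide)

theorem no_true_false (h : (⟨true⟩ : WArr.{u}) ⟶ (⟨false⟩ : WArr.{u})) : False := by
  have h2 : (⟨true⟩ : WArr.{u}) ≤ (⟨false⟩ : WArr.{u}) := leOfHom h
  have h3 : (true : Bool) ≤ false := h2
  exact absurd h3 (by decide)

/-- The functor from the walking arrow selecting a morphism `m : c ⟶ c'`. -/
noncomputable def af {C : Type*} [Category C] {c c' : C} (m : c ⟶ c') :
    WArr.{u} ⥤ C where
  obj x := bif x.down then c' else c
  map {x y} h :=
    match x, y, h with
    | ⟨false⟩, ⟨false⟩, _ => 𝟙 c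
    | ⟨false⟩, ⟨true⟩, _ => m
    | ⟨true⟩, ⟨true⟩, _ => 𝟙 c'
    | ⟨true⟩, ⟨false⟩, h => (no_true_false h).elim
  map_id x := by rcases x with ⟨_|_⟩ <;> rfl
  map_comp {x y z} h h' := by
    rcases x with ⟨_|_⟩ <;> rcases y with ⟨_|_⟩ <;> rcases z with ⟨_|_⟩ <;>
      first
        | exact (no_true_false h).elim
        | exact (no_true_false h').elim
        | simp

theorem T_funext {C : Type*} [Category C] {F G : WArr.{u} ⥤ C}
    (h0 : F.obj ⟨false⟩ = G.obj ⟨false⟩) (h1 : F.obj ⟨true⟩ = G.obj ⟨true⟩)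
    (hm : F.map warr = eqToHom h0 ≫ G.map warr ≫ eqToHom h1.symm) : F = G := by
  have hobj : ∀ x : WArr.{u}, F.obj x = G.obj x := by rintro ⟨_|_⟩ <;> assumption
  refine CategoryTheory.Functor.ext hobj ?_
  intro x y h
  rcases x with ⟨_|_⟩ <;> rcases y with ⟨_|_⟩
  · rw [show h = 𝟙 (⟨false⟩ : WArr.{u}) from Subsingleton.elim _ _]; simp
  · rw [show h = warr from Subsingleton.elim _ _]; exact hm
  · exact (no_true_false h).elim
  · rw [show h = 𝟙 (⟨true⟩ : WArr.{u}) from Subsingleton.elim _ _]; simp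

theorem thin_funext {C D : Type*} [Category C] [Category D]
    (hD : ∀ x y : D, Subsingleton (x ⟶ y)) {F G : C ⥤ D}
    (hobj : ∀ x, F.obj x = G.obj x) : F = G := by
  refine CategoryTheory.Functor.ext hobj ?_
  intro x y m
  exact @Subsingleton.elim _ (hD _ _) _ _

theorem const_comp_eq {J : Type*} [Category J] {C D : Type*} [Category C] [Category D]
    (z : C) (F : C ⥤ D) :
    (Functor.const J).obj z ⋙ F = (Functor.const J).obj (F.obj z) := by
  refine CategoryTheory.Functor.ext (fun _ => rfl) ?_
  intro x y m
  simp

/-- In a pullback square in `Cat`, the two projections are jointly injective on objects. -/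
theorem pb_obj_inj {P C A B : Cat.{u,u}} {π₁ : P ⟶ C} {π₂ : P ⟶ A} {p : C ⟶ B} {f : A ⟶ B}
    (hp : IsPullback π₁ π₂ p f) {z z' : ↑P}
    (h1 : π₁.toFunctor.obj z = π₁.toFunctor.obj z') (h2 : π₂.toFunctor.obj z = π₂.toFunctor.obj z') : z = z' := by
  let pt : Cat.{u,u} := Cat.of (PUnit.{u+1})
  let k : pt ⟶ P := ((Functor.const ↑pt).obj z).toCatHom
  let k' : pt ⟶ P := ((Functor.const ↑pt).obj z').toCatHom
  have e1 : k ≫ π₁ = k' ≫ π₁ := by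
    apply Cat.ext
    show (Functor.const ↑pt).obj z ⋙ π₁.toFunctor = (Functor.const ↑pt).obj z' ⋙ π₁.toFunctor
    rw [const_comp_eq, const_comp_eq, h1]
  have e2 : k ≫ π₂ = k' ≫ π₂ := by
    apply Cat.ext
    show (Functor.const ↑pt).obj z ⋙ π₂.toFunctor = (Functor.const ↑pt).obj z' ⋙ π₂.toFunctor
    rw [const_comp_eq, const_comp_eq, h2]
  have hk : k = k' := hp.hom_ext e1 e2
  exact congrArg (fun (F : pt ⟶ P) => F.toFunctor.obj ⟨⟩) hk

theorem monadic_faithful {C : Type*} {D : Type*} [Category C] [Category D]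
    (R : D ⥤ C) [MonadicRightAdjoint R] : R.Faithful :=
  Functor.Faithful.of_iso (Monad.comparisonForget (monadicAdjunction R))

theorem ICat_thin (P : Cat.{u,u}) : ∀ x y : ↑(ICat P), Subsingleton (x ⟶ y) :=
  fun _ _ => ⟨fun ⟨⟨h1⟩⟩ ⟨⟨h2⟩⟩ => rfl⟩

/-- If `f` is not faithful then there is a functor from a preorder along which the pullback
of `f` is never a preorder; consequently `f` is not a covering. -/
theorem not_faithful_implies_not_covering {A B : Cat.{u, u}} (f : A ⟶ B)
    (h : ¬ ∀ a a' : ↑A, Function.Injective (fun g : a ⟶ a' => f.toFunctor.map g)) :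
    (∃ (X : Cat.{u, u}) (φ : X ⟶ B), Thin X ∧
      ∀ (P : Cat.{u, u}) (π₁ : P ⟶ X) (π₂ : P ⟶ A),
        IsPullback π₁ π₂ φ f → ¬ Thin P) ∧
    ¬ Covering f := by
  push_neg at h
  obtain ⟨a, a', hninj⟩ := h
  rw [Function.not_injective_iff] at hninj
  obtain ⟨g, g', hfg, hne⟩ := hninj
  -- the walking arrow and the two functors selecting `g` and `g'`
  let X : Cat.{u,u} := Cat.of (WArr.{u})
  let s : X ⟶ A := (af g : WArr.{u} ⥤ ↑A).toCatHom
  let s' : X ⟶ A := (af g' : WArr.{u} ⥤ ↑A).toCatHom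
  let φ : X ⟶ B := s ≫ f
  have hsobj : ∀ x : ↑X, s.toFunctor.obj x = s'.toFunctor.obj x := fun _ => rfl
  have hss' : s' ≫ f = φ := by
    refine Cat.ext (T_funext rfl rfl ?_)
    show f.toFunctor.map g' = eqToHom rfl ≫ f.toFunctor.map g ≫ eqToHom rfl
    simp [hfg]
  have hsne : s ≠ s' := by
    intro e
    apply hne
    have e2 := Functor.congr_hom (congrArg Cat.Hom.toFunctor e) warr.{u}
    have e3 : g = eqToHom rfl ≫ g' ≫ eqToHom rfl := e2
    simpa using e3
  have hthinX : Thin X := fun x y =>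
    (inferInstance : Subsingleton ((show WArr.{u} from x) ⟶ (show WArr.{u} from y)))
  constructor
  · refine ⟨X, φ, hthinX, ?_⟩
    intro P π₁ π₂ hpb hthin
    have hw : 𝟙 X ≫ φ = s ≫ f := by simp [φ]
    have hw' : 𝟙 X ≫ φ = s' ≫ f := by rw [hss']; simp
    set w : X ⟶ P := hpb.lift (𝟙 X) s hw with hwdef
    set w' : X ⟶ P := hpb.lift (𝟙 X) s' hw' with hwdef'
    have hwobj : ∀ x : ↑X, w.toFunctor.obj x = w'.toFunctor.obj x := by
      intro x
      refine pb_obj_inj hpb ?_ ?_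
      · have h1 := congrArg (fun (F : X ⟶ X) => F.toFunctor.obj x) (hpb.lift_fst (𝟙 X) s hw)
        have h2 := congrArg (fun (F : X ⟶ X) => F.toFunctor.obj x) (hpb.lift_fst (𝟙 X) s' hw')
        exact h1.trans h2.symm
      · have h1 := congrArg (fun (F : X ⟶ A) => F.toFunctor.obj x) (hpb.lift_snd (𝟙 X) s hw)
        have h2 := congrArg (fun (F : X ⟶ A) => F.toFunctor.obj x) (hpb.lift_snd (𝟙 X) s' hw')
        exact (h1.trans (hsobj x)).trans h2.symm
    have hww' : w = w' :=
      Cat.ext (T_funext (hwobj _) (hwobj _) (@Subsingleton.elim _ (hthin _ _) _ _))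
    apply hsne
    calc s = w ≫ π₂ := (hpb.lift_snd (𝟙 X) s hw).symm
      _ = w' ≫ π₂ := by rw [hww']
      _ = s' := hpb.lift_snd (𝟙 X) s' hw'
  · rintro ⟨C, P, p, π₁, π₂, ⟨hdesc⟩, hp, htriv⟩
    haveI := hdesc
    haveI : (Over.pullback p).Faithful := monadic_faithful _
    let sh : Over.mk φ ⟶ Over.mk f := Over.homMk s rfl
    let sh' : Over.mk φ ⟶ Over.mk f := Over.homMk s' hss'
    -- the isomorphism of `P` with the chosen pullback
    haveI : Limits.HasPullback f p := inferInstance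
    let j := hp.flip.isoPullback
    have hjfst : j.hom ≫ Limits.pullback.fst f p = π₂ := hp.flip.isoPullback_hom_fst
    have hjsnd : j.hom ≫ Limits.pullback.snd f p = π₁ := hp.flip.isoPullback_hom_snd
    have hjifst : j.inv ≫ π₂ = Limits.pullback.fst f p := hp.flip.isoPullback_inv_fst
    have hjisnd : j.inv ≫ π₁ = Limits.pullback.snd f p := hp.flip.isoPullback_inv_snd
    -- left legs of the pulled-back morphisms
    let L : ((Over.pullback p).obj (Over.mk φ)).left ⟶ ((Over.pullback p).obj (Over.mk f)).left :=
      ((Over.pullback p).map sh).left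
    let L' := ((Over.pullback p).map sh').left
    have hLfst : L ≫ Limits.pullback.fst f p = Limits.pullback.fst φ p ≫ s := by
      simp [L, Over.pullback, sh]
      exact Limits.pullback.lift_fst _ _ _
    have hL'fst : L' ≫ Limits.pullback.fst f p = Limits.pullback.fst φ p ≫ s' := by
      simp [L', Over.pullback, sh']
      exact Limits.pullback.lift_fst _ _ _
    have hLsnd : L ≫ Limits.pullback.snd f p = Limits.pullback.snd φ p := by
      simp [L, Over.pullback, sh]
      exact Limits.pullback.lift_snd _ _ _
    have hL'snd : L' ≫ Limits.pullback.snd f p = Limits.pullback.snd φ p := by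
      simp [L', Over.pullback, sh']
      exact Limits.pullback.lift_snd _ _ _
    let q := L ≫ j.inv
    let q' := L' ≫ j.inv
    have hq1 : q ≫ π₁ = Limits.pullback.snd φ p := by
      simp only [q, Category.assoc, hjisnd]; exact hLsnd
    have hq1' : q' ≫ π₁ = Limits.pullback.snd φ p := by
      simp only [q', Category.assoc, hjisnd]; exact hL'snd
    have hq2 : q ≫ π₂ = Limits.pullback.fst φ p ≫ s := by
      simp only [q, Category.assoc, hjifst]; exact hLfst
    have hq2' : q' ≫ π₂ = Limits.pullback.fst φ p ≫ s' := by
      simp only [q', Category.assoc, hjifst]; exact hL'fst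
    have hqobj : ∀ z, q.toFunctor.obj z = q'.toFunctor.obj z := by
      intro z
      refine pb_obj_inj hp ?_ ?_
      · have h1 := congrArg (fun (F : _ ⟶ C) => F.toFunctor.obj z) hq1
        have h2 := congrArg (fun (F : _ ⟶ C) => F.toFunctor.obj z) hq1'
        exact h1.trans h2.symm
      · have h1 := congrArg (fun (F : _ ⟶ A) => F.toFunctor.obj z) hq2
        have h2 := congrArg (fun (F : _ ⟶ A) => F.toFunctor.obj z) hq2'
        exact (h1.trans (hsobj _)).trans h2.symm
    have hqeq : q = q' := by
      refine htriv.hom_ext ?_ ?_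
      · -- compositions with etaF P agree: target is thin
        refine Cat.ext (thin_funext (ICat_thin P) ?_)
        intro z
        exact congrArg (fun y => (etaF P).toFunctor.obj y) (hqobj z)
      · exact hq1.trans hq1'.symm
    have hLL' : L = L' := by
      have : q ≫ j.hom = q' ≫ j.hom := by rw [hqeq]
      simpa [q, q'] using this
    have hmap : (Over.pullback p).map sh = (Over.pullback p).map sh' :=
      Over.OverMorphism.ext hLL'
    have : sh = sh' := (Over.pullback p).map_injective hmap
    exact hsne (congrArg CommaMorphism.left this)
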